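/- Let G=(V,E) be a directed polymatroidal network and let ℓ, ℓ(e,u), ℓ(e,v) be a fractional cut solution. Then there exist a finite directed edge-capacitated graph H=(V_H,E_H) with V ⊆ V_H, edge lengths ℓ': E_H → ℝ≥0 and edge costs c: E_H → ℝ≥0 ∪ {∞} such that: (i) dist_{ℓ'}(u,v) = dist_ℓ(u,v) for all u,v ∈ V; (ii) Σ_{e∈E_H} c(e)·ℓ'(e) = Σ_{v∈V} (ρ̂_v⁻(d_v⁻) + ρ̂_v⁺(d_v⁺)); and (iii) for every finite-cost F' ⊆ E_H there exists F ⊆ E such that every ordered pair (u,v) ∈ V×V separated by F' in H is separated by F in G, and ν(F) ≤ Σ_{e∈F'} c(e). -/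

import Mathlib

open Finset MeasureTheory
open scoped ENNReal Classical

/-- A directed polymatroidal network: a finite directed graph together with,
for each node `v`, polymatroids `rhoM v` on the edges entering `v` and
`rhoP v` on the edges leaving `v`. -/
structure DirPolyNet (V E : Type) [Fintype V] [Fintype E] [DecidableEq V] [DecidableEq E] where
  tail : E → V
  head : E → V
  rhoM : V → Finset E → ℝ
  rhoP : V → Finset E → ℝ
  rhoM_empty : ∀ v, rhoM v ∅ = 0
  rhoP_empty : ∀ v, rhoP v ∅ = 0
  rhoM_nonneg : ∀ v A, A ⊆ Finset.univ.filter (fun e => head e = v) → 0 ≤ rhoM v A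
  rhoP_nonneg : ∀ v A, A ⊆ Finset.univ.filter (fun e => tail e = v) → 0 ≤ rhoP v A
  rhoM_mono : ∀ v A B, A ⊆ B → B ⊆ Finset.univ.filter (fun e => head e = v) →
    rhoM v A ≤ rhoM v B
  rhoP_mono : ∀ v A B, A ⊆ B → B ⊆ Finset.univ.filter (fun e => tail e = v) →
    rhoP v A ≤ rhoP v B
  rhoM_submod : ∀ v A B, A ⊆ Finset.univ.filter (fun e => head e = v) →
    B ⊆ Finset.univ.filter (fun e => head e = v) →
    rhoM v (A ∪ B) + rhoM v (A ∩ B) ≤ rhoM v A + rhoM v B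
  rhoP_submod : ∀ v A B, A ⊆ Finset.univ.filter (fun e => tail e = v) →
    B ⊆ Finset.univ.filter (fun e => tail e = v) →
    rhoP v (A ∪ B) + rhoP v (A ∩ B) ≤ rhoP v A + rhoP v B

namespace DirPolyNet

variable {V E : Type} [Fintype V] [Fintype E] [DecidableEq V] [DecidableEq E]

/-- The set of edges entering `v` (the ground set of `rhoM v`). -/
def inE (N : DirPolyNet V E) (v : V) : Finset E :=
  Finset.univ.filter (fun e => N.head e = v)

/-- The set of edges leaving `v` (the ground set of `rhoP v`). -/
def outE (N : DirPolyNet V E) (v : V) : Finset E :=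
  Finset.univ.filter (fun e => N.tail e = v)

/-- `g` is a valid assignment of the edges of `F` to endpoints. -/
def Valid (N : DirPolyNet V E) (F : Finset E) (g : E → V) : Prop :=
  ∀ e ∈ F, g e = N.tail e ∨ g e = N.head e

/-- The cost `ν(F)` of the edge cut `F`: the minimum over valid assignments `g`
of `Σ_v (ρ⁻_v(δ⁻(v) ∩ g⁻¹(v)) + ρ⁺_v(δ⁺(v) ∩ g⁻¹(v)))`. -/
noncomputable def cutCost (N : DirPolyNet V E) (F : Finset E) : ℝ :=
  sInf { c : ℝ | ∃ g : E → V, N.Valid F g ∧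
    c = ∑ v : V, (N.rhoM v ((N.inE v ∩ F).filter (fun e => g e = v)) +
                  N.rhoP v ((N.outE v ∩ F).filter (fun e => g e = v))) }

/-- `IsWalk N s t p`: the list of edges `p` forms a directed walk from `s` to `t`. -/
def IsWalk (N : DirPolyNet V E) : V → V → List E → Prop
  | s, t, [] => s = t
  | s, t, e :: p => N.tail e = s ∧ IsWalk N (N.head e) t p

/-- The list of vertices visited by a walk starting at `s`. -/
def walkVerts (N : DirPolyNet V E) : V → List E → List V
  | s, [] => [s]
  | s, e :: p => s :: walkVerts N (N.head e) p

/-- A simple directed path from `s` to `t`. -/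
def IsPath (N : DirPolyNet V E) (s t : V) (p : List E) : Prop :=
  N.IsWalk s t p ∧ (N.walkVerts s p).Nodup

/-- `F` separates the ordered pair `(s,t)`: there is no `s→t` path avoiding `F`. -/
def Separates (N : DirPolyNet V E) (F : Finset E) (s t : V) : Prop :=
  ¬ ∃ p : List E, N.IsWalk s t p ∧ ∀ e ∈ p, e ∉ F

/-- Total flow on an edge `e`. -/
noncomputable def edgeFlow (N : DirPolyNet V E) {ι : Type} [Fintype ι]
    (f : ι → List E → ℝ) (e : E) : ℝ :=
  ∑ i : ι, ∑ᶠ p ∈ {p : List E | e ∈ p}, f i p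

/-- The rate of commodity `i`. -/
noncomputable def rate {ι : Type} (f : ι → List E → ℝ) (i : ι) : ℝ :=
  ∑ᶠ p : List E, f i p

/-- A feasible multicommodity flow for the source-sink pairs `(s i, t i)`. -/
structure IsFlow (N : DirPolyNet V E) {ι : Type} [Fintype ι] (s t : ι → V)
    (f : ι → List E → ℝ) : Prop where
  nonneg : ∀ i p, 0 ≤ f i p
  supp : ∀ i p, f i p ≠ 0 → N.IsPath (s i) (t i) p
  fin : ∀ i, (Function.support (f i)).Finite
  capM : ∀ v, ∀ S ⊆ N.inE v, ∑ e ∈ S, N.edgeFlow f e ≤ N.rhoM v S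
  capP : ∀ v, ∀ S ⊆ N.outE v, ∑ e ∈ S, N.edgeFlow f e ≤ N.rhoP v S

/-- `D(F)`: the total demand of the pairs separated by `F`. -/
noncomputable def sepDemand (N : DirPolyNet V E) {ι : Type} [Fintype ι]
    (s t : ι → V) (D : ι → ℝ) (F : Finset E) : ℝ :=
  ∑ i : ι, if N.Separates F (s i) (t i) then D i else 0

/-- The value of the maximum throughput multicommodity flow. -/
noncomputable def maxThroughput (N : DirPolyNet V E) {ι : Type} [Fintype ι]
    (s t : ι → V) : ℝ :=
  sSup { r : ℝ | ∃ f : ι → List E → ℝ, N.IsFlow s t f ∧ r = ∑ i : ι, rate f i }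

/-- The value of the maximum concurrent multicommodity flow for demands `D`. -/
noncomputable def maxConcurrent (N : DirPolyNet V E) {ι : Type} [Fintype ι]
    (s t : ι → V) (D : ι → ℝ) : ℝ :=
  sSup { lam : ℝ | ∃ f : ι → List E → ℝ, N.IsFlow s t f ∧ ∀ i, rate f i = lam * D i }

end DirPolyNet

/-- `DWalk tl hd s t p`: in the directed graph with tail map `tl` and head map `hd`,
the list of edges `p` is a directed walk from `s` to `t`. -/
def DWalk {V E : Type} (tl hd : E → V) : V → V → List E → Prop
  | s, t, [] => s = t
  | s, t, e :: p => tl e = s ∧ DWalk tl hd (hd e) t p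

/-- Shortest-path distance (in `ℝ≥0∞`, `⊤` when unreachable) under edge lengths `len`. -/
noncomputable def ddist {V E : Type} (tl hd : E → V) (len : E → ℝ) (u v : V) : ℝ≥0∞ :=
  ⨅ p : { p : List E // DWalk tl hd u v p }, ENNReal.ofReal ((p.1.map len).sum)

/-- `F` separates the ordered pair `(s,t)` in the directed graph given by `tl`, `hd`. -/
def DSep {V E : Type} (tl hd : E → V) (F : Finset E) (s t : V) : Prop :=
  ¬ ∃ p : List E, DWalk tl hd s t p ∧ ∀ e ∈ p, e ∉ F

/-- The Lovász extension of `ρ` on the ground set `ground`,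
`ρ̂(x) = ∫_0^∞ ρ({e ∈ ground : x e ≥ θ}) dθ` (which agrees with `∫_0^1` when `x ≤ 1`). -/
noncomputable def lovaszExt {E : Type} [Fintype E] (ρ : Finset E → ℝ)
    (ground : Finset E) (x : E → ℝ) : ℝ :=
  ∫ θ in Set.Ioi (0:ℝ), ρ (ground.filter (fun e => θ ≤ x e))

open DirPolyNet


section Aux
variable {E K : Type} [Fintype E] [DecidableEq E] [LinearOrder K]

/-- up-set of `e` in `ground` under the key `κ`. -/
def upSet (κ : E → K) (ground : Finset E) (e : E) : Finset E :=
  ground.filter (fun f => κ e ≤ κ f)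

/-- marginal value of `e`. -/
def marg (ρ : Finset E → ℝ) (κ : E → K) (ground : Finset E) (e : E) : ℝ :=
  ρ (upSet κ ground e) - ρ ((upSet κ ground e).erase e)

lemma marg_nonneg (ρ : Finset E → ℝ) (κ : E → K) (ground : Finset E)
    (hmono : ∀ A B, A ⊆ B → B ⊆ ground → ρ A ≤ ρ B) (e : E) :
    0 ≤ marg ρ κ ground e := by
  have h1 : (upSet κ ground e).erase e ⊆ upSet κ ground e := Finset.erase_subset _ _
  have h2 : upSet κ ground e ⊆ ground := Finset.filter_subset _ _
  have := hmono _ _ h1 h2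
  simp [marg]; linarith

lemma telescope (ρ : Finset E → ℝ) (κ : E → K) (hκ : Function.Injective κ)
    (ground : Finset E) (h0 : ρ ∅ = 0) (T : Finset E) (hT : T ⊆ ground)
    (hup : ∀ e ∈ T, ∀ f ∈ ground, κ e ≤ κ f → f ∈ T) :
    ∑ f ∈ T, marg ρ κ ground f = ρ T := by
  induction T using Finset.strongInduction with
  | _ T ih =>
    rcases T.eq_empty_or_nonempty with rfl | hne
    · simpa using h0.symm
    · obtain ⟨e₀, he₀T, hmin⟩ := T.exists_min_image κ hne
      have hUp : upSet κ ground e₀ = T := by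
        apply Finset.Subset.antisymm
        · intro f hf
          simp only [upSet, Finset.mem_filter] at hf
          exact hup e₀ he₀T f hf.1 hf.2
        · intro f hf
          simp only [upSet, Finset.mem_filter]
          exact ⟨hT hf, hmin f hf⟩
      have herase : T.erase e₀ ⊂ T := Finset.erase_ssubset he₀T
      have hup' : ∀ e ∈ T.erase e₀, ∀ f ∈ ground, κ e ≤ κ f → f ∈ T.erase e₀ := by
        intro e he f hf hle
        have heT := Finset.mem_of_mem_erase he
        have hfT := hup e heT f hf hle
        rcases eq_or_ne f e₀ with rfl | hne'
        · exfalso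
          exact Finset.ne_of_mem_erase he (hκ (le_antisymm (hmin e heT) hle)).symm
        · exact Finset.mem_erase.2 ⟨hne', hfT⟩
      have hrec := ih (T.erase e₀) herase ((Finset.erase_subset _ _).trans hT) hup'
      have : ∑ f ∈ T, marg ρ κ ground f
          = marg ρ κ ground e₀ + ∑ f ∈ T.erase e₀, marg ρ κ ground f :=
        (Finset.add_sum_erase T _ he₀T).symm
      rw [this, hrec, marg, hUp]
      ring

lemma lovasz_eq (ρ : Finset E → ℝ) (ground : Finset E) (x : E → ℝ) (κ : E → K)
    (hκ : Function.Injective κ) (hκx : ∀ e f, κ e ≤ κ f → x e ≤ x f)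
    (h0 : ρ ∅ = 0) (hmono : ∀ A B, A ⊆ B → B ⊆ ground → ρ A ≤ ρ B)
    (hx : ∀ e, 0 ≤ x e) :
    lovaszExt ρ ground x = ∑ e ∈ ground, marg ρ κ ground e * x e := by
  have step : Set.EqOn (fun θ : ℝ => ρ (ground.filter (fun e => θ ≤ x e)))
      (fun θ : ℝ => ∑ e ∈ ground,
        (Set.Ioc (0:ℝ) (x e)).indicator (fun _ => marg ρ κ ground e) θ)
      (Set.Ioi (0:ℝ)) := by
    intro θ hθ
    simp only [Set.mem_Ioi] at hθ
    have : ∀ e ∈ ground, (Set.Ioc (0:ℝ) (x e)).indicator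
        (fun _ => marg ρ κ ground e) θ = if θ ≤ x e then marg ρ κ ground e else 0 := by
      intro e _
      by_cases h : θ ≤ x e
      · rw [Set.indicator_of_mem (by exact ⟨hθ, h⟩), if_pos h]
      · rw [Set.indicator_of_notMem (by simp [Set.mem_Ioc, h]), if_neg h]
    simp only [Finset.sum_congr rfl this]
    rw [← Finset.sum_filter]
    exact (telescope ρ κ hκ ground h0 (ground.filter (fun e => θ ≤ x e))
      (Finset.filter_subset _ _)
      (by
        intro e he f hf hle
        simp only [Finset.mem_filter] at he ⊢
        exact ⟨hf, he.2.trans (hκx e f hle)⟩)).symm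
  have hint : ∀ e ∈ ground, Integrable
      ((Set.Ioc (0:ℝ) (x e)).indicator (fun _ => marg ρ κ ground e))
      (volume.restrict (Set.Ioi (0:ℝ))) := by
    intro e _
    rw [integrable_indicator_iff measurableSet_Ioc]
    exact integrableOn_const
      ((Measure.restrict_apply_le _ _).trans_lt measure_Ioc_lt_top).ne
  calc lovaszExt ρ ground x
      = ∫ θ in Set.Ioi (0:ℝ), ∑ e ∈ ground,
          (Set.Ioc (0:ℝ) (x e)).indicator (fun _ => marg ρ κ ground e) θ := by
        exact setIntegral_congr_fun measurableSet_Ioi step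
    _ = ∑ e ∈ ground, ∫ θ in Set.Ioi (0:ℝ),
          (Set.Ioc (0:ℝ) (x e)).indicator (fun _ => marg ρ κ ground e) θ :=
        integral_finset_sum _ hint
    _ = ∑ e ∈ ground, marg ρ κ ground e * x e := by
        refine Finset.sum_congr rfl fun e _ => ?_
        rw [setIntegral_indicator measurableSet_Ioc]
        have : Set.Ioi (0:ℝ) ∩ Set.Ioc 0 (x e) = Set.Ioc 0 (x e) := by
          exact Set.inter_eq_right.2 Set.Ioc_subset_Ioi_self
        rw [this, setIntegral_const, measureReal_def, Real.volume_Ioc, smul_eq_mul, sub_zero,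
          ENNReal.toReal_ofReal (hx e), mul_comm]
end Aux
section Gadget
variable {V E : Type} [Fintype V] [Fintype E] [DecidableEq V] [DecidableEq E]

/-- key refining a weight function, injective. -/
noncomputable def keyf (x : E → ℝ) : E → ℝ ×ₗ (Fin (Fintype.card E)) :=
  fun e => toLex (x e, Fintype.equivFin E e)

lemma keyf_inj (x : E → ℝ) : Function.Injective (keyf x) := by
  intro e f h
  have := congrArg (fun p => (ofLex p).2) h
  simpa using (Fintype.equivFin E).injective this

lemma keyf_mono (x : E → ℝ) : ∀ e f, keyf x e ≤ keyf x f → x e ≤ x f := by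
  intro e f h
  rcases Prod.Lex.le_iff.1 h with h1 | ⟨h1, _⟩
  · exact le_of_lt h1
  · exact le_of_eq h1

variable (N : DirPolyNet V E) (ct ch : E → ℝ)

/-- Gadget edge type: dirP ⊕ conn ⊕ dirM ⊕ loop ⊕ down ⊕ up. -/
abbrev GE (E : Type) : Type := E ⊕ (E ⊕ (E ⊕ (E ⊕ ((E × E) ⊕ (E × E)))))

/-- out-gadget relation. -/
def rP (e f : E) : Prop := N.tail e = N.tail f ∧ keyf ct e ≤ keyf ct f

/-- in-gadget relation. -/
def rM (e g : E) : Prop := N.head e = N.head g ∧ keyf ch e ≤ keyf ch g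

noncomputable def gtl : GE E → V ⊕ (E ⊕ E)
  | .inl e => Sum.inl (N.tail e)
  | .inr (.inl e) => Sum.inr (Sum.inl e)
  | .inr (.inr (.inl e)) => Sum.inr (Sum.inr e)
  | .inr (.inr (.inr (.inl e))) => Sum.inl (N.tail e)
  | .inr (.inr (.inr (.inr (.inl (e, f))))) =>
      Sum.inr (Sum.inl (if rP N ct e f then f else e))
  | .inr (.inr (.inr (.inr (.inr (e, _))))) => Sum.inr (Sum.inr e)

noncomputable def ghd : GE E → V ⊕ (E ⊕ E)
  | .inl e => Sum.inr (Sum.inl e)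
  | .inr (.inl e) => Sum.inr (Sum.inr e)
  | .inr (.inr (.inl e)) => Sum.inl (N.head e)
  | .inr (.inr (.inr (.inl e))) => Sum.inl (N.tail e)
  | .inr (.inr (.inr (.inr (.inl (e, _))))) => Sum.inr (Sum.inl e)
  | .inr (.inr (.inr (.inr (.inr (e, g))))) =>
      Sum.inr (Sum.inr (if rM N ch e g then g else e))

def glen : GE E → ℝ
  | .inl e => ct e
  | .inr (.inr (.inl e)) => ch e
  | _ => 0

noncomputable def mP (e : E) : ℝ :=
  marg (N.rhoP (N.tail e)) (keyf ct) (N.outE (N.tail e)) e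

noncomputable def mM (e : E) : ℝ :=
  marg (N.rhoM (N.head e)) (keyf ch) (N.inE (N.head e)) e

noncomputable def gcost : GE E → ℝ≥0∞
  | .inl e => ENNReal.ofReal (mP N ct e)
  | .inr (.inr (.inl e)) => ENNReal.ofReal (mM N ch e)
  | _ => ⊤

lemma glen_nonneg (hct : ∀ e, 0 ≤ ct e) (hch : ∀ e, 0 ≤ ch e) :
    ∀ a : GE E, 0 ≤ glen ct ch a := by
  rintro (e | e | e | e | ⟨e, f⟩ | ⟨e, g⟩) <;> simp [glen] <;> [exact hct e; exact hch e]

/-- the 3-arc lift of a walk. -/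
def lift3 : List E → List (GE E)
  | [] => []
  | e :: p => .inl e :: .inr (.inl e) :: .inr (.inr (.inl e)) :: lift3 p

lemma lift3_walk : ∀ (p : List E) (s t : V), N.IsWalk s t p →
    DWalk (gtl N ct) (ghd N ch) (Sum.inl s) (Sum.inl t) (lift3 p) := by
  intro p
  induction p with
  | nil => intro s t h; exact congrArg Sum.inl h
  | cons e p ih =>
    intro s t h
    obtain ⟨h1, h2⟩ := h
    exact ⟨by simp [gtl, h1], by simp [gtl, ghd], by simp [gtl, ghd],
      by simpa [gtl, ghd] using ih _ _ h2⟩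

lemma lift3_len : ∀ p : List E,
    ((lift3 p).map (glen ct ch)).sum = (p.map (fun e => ct e + ch e)).sum := by
  intro p
  induction p with
  | nil => rfl
  | cons e p ih => simp [lift3, glen, ih]; ring

end Gadget
section Dist
variable {V E : Type} [Fintype V] [Fintype E] [DecidableEq V] [DecidableEq E]
variable (N : DirPolyNet V E) (ct ch : E → ℝ)

/-- invariant for the backward induction over gadget walks. -/
def GInv (t : V) : V ⊕ (E ⊕ E) → ℝ → Prop
  | .inl u, L => ∃ q, N.IsWalk u t q ∧ (q.map (fun e => ct e + ch e)).sum ≤ L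
  | .inr (.inl e), L => ∃ e' q, N.tail e' = N.tail e ∧ N.IsWalk (N.head e') t q ∧
      ct e' + ch e' + (q.map (fun e => ct e + ch e)).sum ≤ ct e + L
  | .inr (.inr e), L => ∃ q, N.IsWalk (N.head e) t q ∧
      ch e + (q.map (fun e => ct e + ch e)).sum ≤ L

lemma inv_of_walk (hct : ∀ e, 0 ≤ ct e) (hch : ∀ e, 0 ≤ ch e) :
    ∀ (p : List (GE E)) (x : V ⊕ (E ⊕ E)) (t : V),
    DWalk (gtl N ct) (ghd N ch) x (Sum.inl t) p →
    GInv N ct ch t x ((p.map (glen ct ch)).sum) := by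
  intro p
  induction p with
  | nil =>
    intro x t h
    have hx : x = Sum.inl t := h
    subst hx
    exact ⟨[], rfl, le_refl 0⟩
  | cons a p ih =>
    intro x t h
    obtain ⟨h1, h2⟩ := h
    have IH := ih _ t h2
    subst h1
    rcases a with e | e | e | e | ⟨e, f⟩ | ⟨e, g⟩
    · -- dirP e : inl (tail e) → z e, length ct e
      simp only [ghd] at IH
      obtain ⟨e', q, hte, hwq, hb⟩ := IH
      refine ⟨e' :: q, ⟨hte.trans rfl, hwq⟩, ?_⟩
      simp only [List.map_cons, List.sum_cons, glen]
      linarith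
    · -- conn e : z e → w e, length 0
      simp only [ghd] at IH
      obtain ⟨q, hwq, hb⟩ := IH
      refine ⟨e, q, rfl, hwq, ?_⟩
      simp only [List.map_cons, List.sum_cons, glen]
      linarith
    · -- dirM e : w e → inl (head e), length ch e
      simp only [ghd] at IH
      obtain ⟨q, hwq, hb⟩ := IH
      refine ⟨q, hwq, ?_⟩
      simp only [List.map_cons, List.sum_cons, glen]
      linarith
    · -- loop e : inl (tail e) → inl (tail e), length 0
      simp only [ghd] at IH
      obtain ⟨q, hwq, hb⟩ := IH
      refine ⟨q, hwq, ?_⟩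
      simp only [List.map_cons, List.sum_cons, glen]
      linarith
    · -- down (e,f) : z (ite) → z e, length 0
      simp only [ghd] at IH
      obtain ⟨e', q, hte, hwq, hb⟩ := IH
      simp only [gtl]
      by_cases hrp : rP N ct e f
      · rw [if_pos hrp]
        refine ⟨e', q, hte.trans hrp.1, hwq, ?_⟩
        have hct' : ct e ≤ ct f := keyf_mono ct e f hrp.2
        simp only [List.map_cons, List.sum_cons, glen]
        linarith
      · rw [if_neg hrp]
        refine ⟨e', q, hte, hwq, ?_⟩
        simp only [List.map_cons, List.sum_cons, glen]
        linarith
    · -- up (e,g) : w e → w (ite), length 0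
      simp only [ghd] at IH
      simp only [gtl]
      by_cases hrm : rM N ch e g
      · rw [if_pos hrm] at IH
        obtain ⟨q, hwq, hb⟩ := IH
        refine ⟨q, hrm.1 ▸ hwq, ?_⟩
        have : ch e ≤ ch g := keyf_mono ch e g hrm.2
        simp only [List.map_cons, List.sum_cons, glen]
        linarith
      · rw [if_neg hrm] at IH
        obtain ⟨q, hwq, hb⟩ := IH
        refine ⟨q, hwq, ?_⟩
        simp only [List.map_cons, List.sum_cons, glen]
        linarith

lemma isWalk_iff_dwalk : ∀ (p : List E) (s t : V),
    N.IsWalk s t p ↔ DWalk N.tail N.head s t p := by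
  intro p
  induction p with
  | nil => intro s t; rfl
  | cons e p ih =>
    intro s t
    constructor
    · rintro ⟨h1, h2⟩; exact ⟨h1, (ih _ _).1 h2⟩
    · rintro ⟨h1, h2⟩; exact ⟨h1, (ih _ _).2 h2⟩

lemma ddist_eq (hct : ∀ e, 0 ≤ ct e) (hch : ∀ e, 0 ≤ ch e) (u v : V) :
    ddist (gtl N ct) (ghd N ch) (glen ct ch) (Sum.inl u) (Sum.inl v)
      = ddist N.tail N.head (fun e => ct e + ch e) u v := by
  apply le_antisymm
  · -- lift each G-walk
    apply le_iInf
    rintro ⟨p, hp⟩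
    have hw := lift3_walk N ct ch p u v ((isWalk_iff_dwalk N p u v).2 hp)
    calc ddist (gtl N ct) (ghd N ch) (glen ct ch) (Sum.inl u) (Sum.inl v)
        ≤ ENNReal.ofReal (((lift3 p).map (glen ct ch)).sum) := iInf_le (fun q : { q : List (GE E) // DWalk (gtl N ct) (ghd N ch) (Sum.inl u) (Sum.inl v) q } =>
            ENNReal.ofReal ((q.1.map (glen ct ch)).sum)) ⟨lift3 p, hw⟩
      _ = ENNReal.ofReal ((p.map (fun e => ct e + ch e)).sum) := by rw [lift3_len]
  · apply le_iInf
    rintro ⟨p, hp⟩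
    obtain ⟨q, hq, hlen⟩ := inv_of_walk N ct ch hct hch p (Sum.inl u) v hp
    calc ddist N.tail N.head (fun e => ct e + ch e) u v
        ≤ ENNReal.ofReal ((q.map (fun e => ct e + ch e)).sum) :=
          iInf_le (fun r : { r : List E // DWalk N.tail N.head u v r } =>
            ENNReal.ofReal ((r.1.map (fun e => ct e + ch e)).sum)) ⟨q, (isWalk_iff_dwalk N q u v).1 hq⟩
      _ ≤ ENNReal.ofReal ((p.map (glen ct ch)).sum) := ENNReal.ofReal_le_ofReal hlen

end Dist
section CostSum
variable {V E : Type} [Fintype V] [Fintype E] [DecidableEq V] [DecidableEq E]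
variable (N : DirPolyNet V E) (ct ch : E → ℝ)

lemma mP_nonneg : ∀ e, 0 ≤ mP N ct e := fun e =>
  marg_nonneg _ _ _ (fun A B hAB hB => N.rhoP_mono _ A B hAB hB) e

lemma mM_nonneg : ∀ e, 0 ≤ mM N ch e := fun e =>
  marg_nonneg _ _ _ (fun A B hAB hB => N.rhoM_mono _ A B hAB hB) e

lemma sumP (hct : ∀ e, 0 ≤ ct e) :
    ∑ v : V, lovaszExt (N.rhoP v) (N.outE v) ct = ∑ e : E, mP N ct e * ct e := by
  have hv : ∀ v : V, lovaszExt (N.rhoP v) (N.outE v) ct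
      = ∑ e ∈ N.outE v, marg (N.rhoP v) (keyf ct) (N.outE v) e * ct e := fun v =>
    lovasz_eq (N.rhoP v) (N.outE v) ct (keyf ct) (keyf_inj ct) (keyf_mono ct)
      (N.rhoP_empty v) (fun A B hAB hB => N.rhoP_mono v A B hAB hB) hct
  rw [Finset.sum_congr rfl (fun v _ => hv v)]
  rw [← Finset.sum_fiberwise Finset.univ N.tail (fun e => mP N ct e * ct e)]
  refine Finset.sum_congr rfl fun v _ => Finset.sum_congr rfl fun e he => ?_
  have hte : N.tail e = v := by
    simpa [DirPolyNet.outE] using he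
  simp only [mP, hte]

lemma sumM (hch : ∀ e, 0 ≤ ch e) :
    ∑ v : V, lovaszExt (N.rhoM v) (N.inE v) ch = ∑ e : E, mM N ch e * ch e := by
  have hv : ∀ v : V, lovaszExt (N.rhoM v) (N.inE v) ch
      = ∑ e ∈ N.inE v, marg (N.rhoM v) (keyf ch) (N.inE v) e * ch e := fun v =>
    lovasz_eq (N.rhoM v) (N.inE v) ch (keyf ch) (keyf_inj ch) (keyf_mono ch)
      (N.rhoM_empty v) (fun A B hAB hB => N.rhoM_mono v A B hAB hB) hch
  rw [Finset.sum_congr rfl (fun v _ => hv v)]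
  rw [← Finset.sum_fiberwise Finset.univ N.head (fun e => mM N ch e * ch e)]
  refine Finset.sum_congr rfl fun v _ => Finset.sum_congr rfl fun e he => ?_
  have hte : N.head e = v := by
    simpa [DirPolyNet.inE] using he
  simp only [mM, hte]

lemma gsum (hct : ∀ e, 0 ≤ ct e) (hch : ∀ e, 0 ≤ ch e) :
    ∑ᶠ a : GE E, gcost N ct ch a * ENNReal.ofReal (glen ct ch a) =
      ENNReal.ofReal (∑ v : V,
        (lovaszExt (N.rhoM v) (N.inE v) ch + lovaszExt (N.rhoP v) (N.outE v) ct)) := by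
  rw [finsum_eq_sum_of_fintype]
  rw [Fintype.sum_sum_type, Fintype.sum_sum_type, Fintype.sum_sum_type,
    Fintype.sum_sum_type, Fintype.sum_sum_type]
  have h1 : ∀ e : E, gcost N ct ch (.inl e) * ENNReal.ofReal (glen ct ch (.inl e))
      = ENNReal.ofReal (mP N ct e * ct e) := by
    intro e
    simp only [gcost, glen]
    rw [← ENNReal.ofReal_mul (mP_nonneg N ct e)]
  have h3 : ∀ e : E, gcost N ct ch (.inr (.inr (.inl e)))
      * ENNReal.ofReal (glen ct ch (.inr (.inr (.inl e))))
      = ENNReal.ofReal (mM N ch e * ch e) := by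
    intro e
    simp only [gcost, glen]
    rw [← ENNReal.ofReal_mul (mM_nonneg N ch e)]
  simp only [h1, h3]
  have hz : ∀ (A : Type) [Fintype A], ∀ f : A → GE E,
      (∀ a, gcost N ct ch (f a) = ⊤ ∧ glen ct ch (f a) = 0) →
      ∑ a : A, gcost N ct ch (f a) * ENNReal.ofReal (glen ct ch (f a)) = 0 := by
    intro A _ f hf
    refine Finset.sum_eq_zero fun a _ => ?_
    rw [(hf a).1, (hf a).2]
    simp
  rw [hz E (fun e => .inr (.inl e)) (fun e => ⟨rfl, rfl⟩),
    hz E (fun e => .inr (.inr (.inr (.inl e)))) (fun e => ⟨rfl, rfl⟩),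
    hz (E × E) (fun p => .inr (.inr (.inr (.inr (.inl p))))) (fun p => ⟨rfl, rfl⟩),
    hz (E × E) (fun p => .inr (.inr (.inr (.inr (.inr p))))) (fun p => ⟨rfl, rfl⟩)]
  rw [← ENNReal.ofReal_sum_of_nonneg (fun e _ => mul_nonneg (mP_nonneg N ct e) (hct e)),
    ← ENNReal.ofReal_sum_of_nonneg (fun e _ => mul_nonneg (mM_nonneg N ch e) (hch e))]
  simp only [add_zero, zero_add]
  rw [← ENNReal.ofReal_add (Finset.sum_nonneg fun e _ => mul_nonneg (mP_nonneg N ct e) (hct e))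
    (Finset.sum_nonneg fun e _ => mul_nonneg (mM_nonneg N ch e) (hch e))]
  congr 1
  rw [Finset.sum_add_distrib, sumM N ch hch, sumP N ct hct]
  ring
end CostSum
section Cut
variable {V E : Type} [Fintype V] [Fintype E] [DecidableEq V] [DecidableEq E]
variable (N : DirPolyNet V E) (ct ch : E → ℝ)

lemma cut_main (F' : Finset (GE E)) (hF' : ∀ a ∈ F', gcost N ct ch a ≠ ⊤) :
    ∃ F : Finset E,
      (∀ u v : V, DSep (gtl N ct) (ghd N ch) F' (Sum.inl u) (Sum.inl v) →
        DSep N.tail N.head F u v) ∧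
      ENNReal.ofReal (N.cutCost F) ≤ ∑ a ∈ F', gcost N ct ch a := by
  classical
  set tS : E → Prop := fun e => ∀ f, rP N ct e f → (Sum.inl f : GE E) ∈ F' with htS
  set hS : E → Prop := fun e => ∀ g, rM N ch e g →
    (Sum.inr (Sum.inr (Sum.inl g)) : GE E) ∈ F' with hhS
  set F : Finset E := Finset.univ.filter (fun e => N.tail e ≠ N.head e ∧ (tS e ∨ hS e))
    with hF
  have hnotmem : ∀ a : GE E, gcost N ct ch a = ⊤ → a ∉ F' := fun a ha hmem => hF' a hmem ha
  refine ⟨F, ?_, ?_⟩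
  · -- separation
    intro u v hsep
    rintro ⟨p, hp, havoid⟩
    apply hsep
    clear hsep
    have main : ∀ (p : List E) (s t : V), DWalk N.tail N.head s t p →
        (∀ e ∈ p, e ∉ F) → ∃ q, DWalk (gtl N ct) (ghd N ch) (Sum.inl s) (Sum.inl t) q ∧
        ∀ a ∈ q, a ∉ F' := by
      intro p
      induction p with
      | nil =>
        intro s t h _
        exact ⟨[], congrArg Sum.inl h, by simp⟩
      | cons e p ih =>
        intro s t h hav
        obtain ⟨h1, h2⟩ := h
        obtain ⟨q', hq', hav'⟩ := ih (N.head e) t h2 (fun e' he' => hav e' (by simp [he']))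
        have heF : e ∉ F := hav e (by simp)
        by_cases hloop : N.tail e = N.head e
        · refine ⟨(Sum.inr (Sum.inr (Sum.inr (Sum.inl e)))) :: q', ⟨by simp [gtl, h1], ?_⟩, ?_⟩
          · show DWalk _ _ (ghd N ch (Sum.inr (Sum.inr (Sum.inr (Sum.inl e))))) _ q'
            simpa [ghd, hloop] using hq'
          · intro a ha
            rcases List.mem_cons.1 ha with rfl | ha
            · exact hnotmem _ rfl
            · exact hav' a ha
        · have : ¬(tS e ∨ hS e) := by
            intro hcon
            exact heF (Finset.mem_filter.2 ⟨Finset.mem_univ e, hloop, hcon⟩)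
          push_neg at this
          obtain ⟨hnts, hnhs⟩ := this
          simp only [htS, not_forall] at hnts
          simp only [hhS, not_forall] at hnhs
          obtain ⟨f, hrpf, hfnot⟩ := hnts
          obtain ⟨g, hrmg, hgnot⟩ := hnhs
          refine ⟨Sum.inl f :: Sum.inr (Sum.inr (Sum.inr (Sum.inr (Sum.inl (e, f))))) ::
            Sum.inr (Sum.inl e) :: Sum.inr (Sum.inr (Sum.inr (Sum.inr (Sum.inr (e, g))))) ::
            Sum.inr (Sum.inr (Sum.inl g)) :: q', ?_, ?_⟩
          · refine ⟨by simp [gtl, ← hrpf.1, h1], ?_, ?_, ?_, ?_, ?_⟩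
            · show gtl N ct _ = ghd N ch (Sum.inl f)
              simp [gtl, ghd, if_pos hrpf]
            · show gtl N ct _ = ghd N ch (Sum.inr (Sum.inr (Sum.inr (Sum.inr (Sum.inl (e, f))))))
              simp [gtl, ghd]
            · show gtl N ct _ = ghd N ch (Sum.inr (Sum.inl e))
              simp [gtl, ghd]
            · show gtl N ct _ = ghd N ch (Sum.inr (Sum.inr (Sum.inr (Sum.inr (Sum.inr (e, g))))))
              simp [gtl, ghd, if_pos hrmg]
            · show DWalk _ _ (ghd N ch (Sum.inr (Sum.inr (Sum.inl g)))) _ q'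
              simpa [ghd, hrmg.1] using hq'
          · intro a ha
            simp only [List.mem_cons] at ha
            rcases ha with rfl | rfl | rfl | rfl | rfl | ha
            · exact hfnot
            · exact hnotmem _ rfl
            · exact hnotmem _ rfl
            · exact hnotmem _ rfl
            · exact hgnot
            · exact hav' a ha
    obtain ⟨q, hq, havq⟩ := main p u v hp havoid
    exact ⟨q, hq, havq⟩
  · -- cost bound
    set gass : E → V := fun e => if hS e then N.head e else N.tail e with hgass
    have hgassP : ∀ e, hS e → gass e = N.head e := fun e h => by
      show (if hS e then N.head e else N.tail e) = N.head e
      rw [if_pos h]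
    have hgassN : ∀ e, ¬ hS e → gass e = N.tail e := fun e h => by
      show (if hS e then N.head e else N.tail e) = N.tail e
      rw [if_neg h]
    set SM : V → Finset E := fun v => (N.inE v).filter hS with hSM
    set SP : V → Finset E := fun v => (N.outE v).filter tS with hSP
    set TM : Finset E := Finset.univ.filter
      (fun f => (Sum.inr (Sum.inr (Sum.inl f)) : GE E) ∈ F') with hTM
    set TP : Finset E := Finset.univ.filter (fun f => (Sum.inl f : GE E) ∈ F') with hTP
    have hinE : ∀ v, N.inE v = Finset.univ.filter (fun e => N.head e = v) := fun v => rfl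
    have houtE : ∀ v, N.outE v = Finset.univ.filter (fun e => N.tail e = v) := fun v => rfl
    -- step 1 : cutCost F ≤ C
    have hAsub : ∀ v, ((N.inE v ∩ F).filter (fun e => gass e = v)) ⊆ SM v := by
      intro v e he
      simp only [Finset.mem_filter, Finset.mem_inter] at he
      obtain ⟨⟨heIn, heF⟩, hegass⟩ := he
      have hhead : N.head e = v := by simpa [DirPolyNet.inE] using heIn
      have heF' := Finset.mem_filter.1 heF
      by_cases hse : hS e
      · exact Finset.mem_filter.2 ⟨heIn, hse⟩
      · exfalso
        have h' : gass e = N.tail e := hgassN e hse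
        exact heF'.2.1 ((h' ▸ hegass).trans hhead.symm)
    have hBsub : ∀ v, ((N.outE v ∩ F).filter (fun e => gass e = v)) ⊆ SP v := by
      intro v e he
      simp only [Finset.mem_filter, Finset.mem_inter] at he
      obtain ⟨⟨heIn, heF⟩, hegass⟩ := he
      have htail : N.tail e = v := by simpa [DirPolyNet.outE] using heIn
      have heF' := Finset.mem_filter.1 heF
      by_cases hse : hS e
      · exfalso
        have h' : gass e = N.head e := hgassP e hse
        exact heF'.2.1 (htail.trans (h' ▸ hegass).symm)
      · rcases heF'.2.2 with hts | hhs
        · exact Finset.mem_filter.2 ⟨heIn, hts⟩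
        · exact absurd hhs hse
    have step1 : N.cutCost F ≤ ∑ v : V,
        (N.rhoM v ((N.inE v ∩ F).filter (fun e => gass e = v)) +
         N.rhoP v ((N.outE v ∩ F).filter (fun e => gass e = v))) := by
      apply csInf_le
      · refine ⟨0, fun x hx => ?_⟩
        obtain ⟨g', _, rfl⟩ := hx
        refine Finset.sum_nonneg fun v _ => add_nonneg ?_ ?_
        · exact N.rhoM_nonneg v _ (((Finset.filter_subset _ _).trans
            Finset.inter_subset_left).trans (le_of_eq (hinE v)))
        · exact N.rhoP_nonneg v _ (((Finset.filter_subset _ _).trans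
            Finset.inter_subset_left).trans (le_of_eq (houtE v)))
      · exact ⟨gass, fun e _ => by
          by_cases hse : hS e
          · exact Or.inr (hgassP e hse)
          · exact Or.inl (hgassN e hse), rfl⟩
    -- step 2
    have step2 : ∀ v : V,
        N.rhoM v ((N.inE v ∩ F).filter (fun e => gass e = v)) +
          N.rhoP v ((N.outE v ∩ F).filter (fun e => gass e = v))
        ≤ N.rhoM v (SM v) + N.rhoP v (SP v) := fun v =>
      add_le_add
        (N.rhoM_mono v _ _ (hAsub v) ((Finset.filter_subset _ _).trans (le_of_eq (hinE v))))
        (N.rhoP_mono v _ _ (hBsub v) ((Finset.filter_subset _ _).trans (le_of_eq (houtE v))))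
    -- step 3 : telescope
    have hSMup : ∀ v, ∀ e ∈ SM v, ∀ f ∈ N.inE v, keyf ch e ≤ keyf ch f → f ∈ SM v := by
      intro v e he f hf hle
      simp only [hSM, Finset.mem_filter] at he ⊢
      refine ⟨hf, fun g hrm => he.2 g ⟨?_, hle.trans hrm.2⟩⟩
      have h1 : N.head e = v := by simpa [DirPolyNet.inE] using he.1
      have h2 : N.head f = v := by simpa [DirPolyNet.inE] using hf
      rw [h1, ← h2]; exact hrm.1
    have hSPup : ∀ v, ∀ e ∈ SP v, ∀ f ∈ N.outE v, keyf ct e ≤ keyf ct f → f ∈ SP v := by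
      intro v e he f hf hle
      simp only [hSP, Finset.mem_filter] at he ⊢
      refine ⟨hf, fun g hrp => he.2 g ⟨?_, hle.trans hrp.2⟩⟩
      have h1 : N.tail e = v := by simpa [DirPolyNet.outE] using he.1
      have h2 : N.tail f = v := by simpa [DirPolyNet.outE] using hf
      rw [h1, ← h2]; exact hrp.1
    have step3M : ∀ v, N.rhoM v (SM v) = ∑ f ∈ SM v, mM N ch f := by
      intro v
      rw [← telescope (N.rhoM v) (keyf ch) (keyf_inj ch) (N.inE v) (N.rhoM_empty v)
        (SM v) (Finset.filter_subset _ _) (hSMup v)]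
      refine Finset.sum_congr rfl fun f hf => ?_
      have : N.head f = v := by
        have := (Finset.mem_filter.1 hf).1
        simpa [DirPolyNet.inE] using this
      simp [mM, this]
    have step3P : ∀ v, N.rhoP v (SP v) = ∑ f ∈ SP v, mP N ct f := by
      intro v
      rw [← telescope (N.rhoP v) (keyf ct) (keyf_inj ct) (N.outE v) (N.rhoP_empty v)
        (SP v) (Finset.filter_subset _ _) (hSPup v)]
      refine Finset.sum_congr rfl fun f hf => ?_
      have : N.tail f = v := by
        have := (Finset.mem_filter.1 hf).1
        simpa [DirPolyNet.outE] using this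
      simp [mP, this]
    -- step 4 : compare with TM/TP fibers
    have step4M : ∀ v, ∑ f ∈ SM v, mM N ch f ≤ ∑ f ∈ TM.filter (fun f => N.head f = v),
        mM N ch f := by
      intro v
      apply Finset.sum_le_sum_of_subset_of_nonneg
      · intro f hf
        simp only [hSM, Finset.mem_filter] at hf
        have hmem : (Sum.inr (Sum.inr (Sum.inl f)) : GE E) ∈ F' :=
          hf.2 f ⟨rfl, le_refl _⟩
        have : N.head f = v := by simpa [DirPolyNet.inE] using hf.1
        simp [hTM, hmem, this]
      · intro f _ _
        exact mM_nonneg N ch f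
    have step4P : ∀ v, ∑ f ∈ SP v, mP N ct f ≤ ∑ f ∈ TP.filter (fun f => N.tail f = v),
        mP N ct f := by
      intro v
      apply Finset.sum_le_sum_of_subset_of_nonneg
      · intro f hf
        simp only [hSP, Finset.mem_filter] at hf
        have hmem : (Sum.inl f : GE E) ∈ F' := hf.2 f ⟨rfl, le_refl _⟩
        have : N.tail f = v := by simpa [DirPolyNet.outE] using hf.1
        simp [hTP, hmem, this]
      · intro f _ _
        exact mP_nonneg N ct f
    -- combine real inequalities
    have hreal : N.cutCost F ≤ ∑ f ∈ TM, mM N ch f + ∑ f ∈ TP, mP N ct f := by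
      calc N.cutCost F ≤ _ := step1
        _ ≤ ∑ v : V, (N.rhoM v (SM v) + N.rhoP v (SP v)) :=
          Finset.sum_le_sum fun v _ => step2 v
        _ ≤ ∑ v : V, (∑ f ∈ TM.filter (fun f => N.head f = v), mM N ch f +
            ∑ f ∈ TP.filter (fun f => N.tail f = v), mP N ct f) := by
          refine Finset.sum_le_sum fun v _ => ?_
          rw [step3M v, step3P v]
          exact add_le_add (step4M v) (step4P v)
        _ = ∑ f ∈ TM, mM N ch f + ∑ f ∈ TP, mP N ct f := by
          rw [Finset.sum_add_distrib,
            Finset.sum_fiberwise TM N.head (mM N ch),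
            Finset.sum_fiberwise TP N.tail (mP N ct)]
    -- pass to ℝ≥0∞
    have hTMsum : ENNReal.ofReal (∑ f ∈ TM, mM N ch f)
        = ∑ a ∈ TM.image (fun f => (Sum.inr (Sum.inr (Sum.inl f)) : GE E)), gcost N ct ch a := by
      rw [Finset.sum_image (fun a _ b _ h => by simpa using h)]
      rw [ENNReal.ofReal_sum_of_nonneg (fun f _ => mM_nonneg N ch f)]
      rfl
    have hTPsum : ENNReal.ofReal (∑ f ∈ TP, mP N ct f)
        = ∑ a ∈ TP.image (fun f => (Sum.inl f : GE E)), gcost N ct ch a := by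
      rw [Finset.sum_image (fun a _ b _ h => by simpa using h)]
      rw [ENNReal.ofReal_sum_of_nonneg (fun f _ => mP_nonneg N ct f)]
      rfl
    have hdisj : Disjoint (TM.image (fun f => (Sum.inr (Sum.inr (Sum.inl f)) : GE E)))
        (TP.image (fun f => (Sum.inl f : GE E))) := by
      rw [Finset.disjoint_left]
      intro a ha hb
      obtain ⟨f1, _, rfl⟩ := Finset.mem_image.1 ha
      obtain ⟨f2, _, h⟩ := Finset.mem_image.1 hb
      exact absurd h (by simp)
    have hsub : (TM.image (fun f => (Sum.inr (Sum.inr (Sum.inl f)) : GE E))) ∪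
        (TP.image (fun f => (Sum.inl f : GE E))) ⊆ F' := by
      intro a ha
      rcases Finset.mem_union.1 ha with ha | ha
      · obtain ⟨f, hf, rfl⟩ := Finset.mem_image.1 ha
        exact (Finset.mem_filter.1 hf).2
      · obtain ⟨f, hf, rfl⟩ := Finset.mem_image.1 ha
        exact (Finset.mem_filter.1 hf).2
    calc ENNReal.ofReal (N.cutCost F)
        ≤ ENNReal.ofReal (∑ f ∈ TM, mM N ch f + ∑ f ∈ TP, mP N ct f) :=
          ENNReal.ofReal_le_ofReal hreal
      _ ≤ ENNReal.ofReal (∑ f ∈ TM, mM N ch f) + ENNReal.ofReal (∑ f ∈ TP, mP N ct f) :=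
          ENNReal.ofReal_add_le
      _ = ∑ a ∈ (TM.image (fun f => (Sum.inr (Sum.inr (Sum.inl f)) : GE E))) ∪
            (TP.image (fun f => (Sum.inl f : GE E))), gcost N ct ch a := by
          rw [Finset.sum_union hdisj, hTMsum, hTPsum]
      _ ≤ ∑ a ∈ F', gcost N ct ch a := Finset.sum_le_sum_of_subset hsub
end Cut

/-- Given a directed polymatroidal network `N` and a fractional cut
solution (`ℓ e = ct e + ch e`, the tail and head portions), there is a finite directed
edge-capacitated graph `H` on vertex set `V ⊕ W` with lengths `ℓ'` and costs `c` such that: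
(i) distances between nodes of `V` are preserved; (ii) the total fractional cost
`Σ c(e)·ℓ'(e)` equals `Σ_v (ρ̂⁻_v(d⁻_v) + ρ̂⁺_v(d⁺_v))`; and (iii) every finite-cost cut
`F'` of `H` yields a cut `F` of `N` separating at least the same pairs of `V`-nodes,
with `ν(F) ≤ c(F')`. -/
theorem polymatroidal_to_edge_capacitated_reduction {V E : Type} [Fintype V] [Fintype E]
    [DecidableEq V] [DecidableEq E] (N : DirPolyNet V E)
    (ℓ ct ch : E → ℝ) (hct : ∀ e, 0 ≤ ct e) (hch : ∀ e, 0 ≤ ch e)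
    (hsum : ∀ e, ct e + ch e = ℓ e) :
    ∃ (W E' : Type) (_ : Fintype W) (_ : Fintype E')
      (tl hd : E' → V ⊕ W) (ℓ' : E' → ℝ) (c : E' → ℝ≥0∞),
      (∀ e, 0 ≤ ℓ' e) ∧
      (∀ u v : V, ddist tl hd ℓ' (Sum.inl u) (Sum.inl v) = ddist N.tail N.head ℓ u v) ∧
      (∑ᶠ e : E', c e * ENNReal.ofReal (ℓ' e) =
        ENNReal.ofReal (∑ v : V,
          (lovaszExt (N.rhoM v) (N.inE v) ch + lovaszExt (N.rhoP v) (N.outE v) ct))) ∧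
      (∀ F' : Finset E', (∀ e ∈ F', c e ≠ ⊤) →
        ∃ F : Finset E,
          (∀ u v : V, DSep tl hd F' (Sum.inl u) (Sum.inl v) → DSep N.tail N.head F u v) ∧
          ENNReal.ofReal (N.cutCost F) ≤ ∑ e ∈ F', c e) := by
  have hℓ : ℓ = fun e => ct e + ch e := funext fun e => (hsum e).symm
  subst hℓ
  refine ⟨E ⊕ E, GE E, inferInstance, inferInstance, gtl N ct, ghd N ch,
    glen ct ch, gcost N ct ch, glen_nonneg ct ch hct hch, ?_, ?_, ?_⟩
  · exact fun u v => ddist_eq N ct ch hct hch u v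
  · exact gsum N ct ch hct hch
  · exact fun F' hF' => cut_main N ct ch F' hF'
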